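/- The KAM is locally linear: in any reachable KAM state, every maximal sequence of consecutive commutative transitions has length at most |t̄|, the size of the initial code, because each commutative transition strictly decreases the size of the current code and, by the subterm invariant, every code occurring in a reachable state is a subterm of the initial code. -/

import Mathlib

/-- Terms of the linear substitution calculus:
    `sub t x u` is the explicit substitution `t[x←u]`. -/
inductive Term : Type
  | var : ℕ → Term
  | lam : ℕ → Term → Term
  | app : Term → Term → Term
  | sub : Term → ℕ → Term → Term
deriving DecidableEq

namespace Term

/-- Free variables. -/
def fv : Term → Finset ℕ
  | var x => {x}
  | lam x t => t.fv.erase x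
  | app t u => t.fv ∪ u.fv
  | sub t x u => t.fv.erase x ∪ u.fv

end Term

/-- Substitution contexts `L ::= ⟨·⟩ | L[x←t]`. -/
inductive LCtx : Type
  | hole : LCtx
  | sub : LCtx → ℕ → Term → LCtx
deriving DecidableEq

def LCtx.plug : LCtx → Term → Term
  | .hole, t => t
  | .sub L x u, t => .sub (L.plug t) x u

/-- Weak head contexts `H ::= ⟨·⟩ | H t | H[x←t]`. -/
inductive HCtx : Type
  | hole : HCtx
  | app : HCtx → Term → HCtx
  | sub : HCtx → ℕ → Term → HCtx
deriving DecidableEq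

def HCtx.plug : HCtx → Term → Term
  | .hole, t => t
  | .app H u, t => .app (H.plug t) u
  | .sub H x u, t => .sub (H.plug t) x u

/-- `H.captures x` holds when the hole of `H` lies under a binder for `x`. -/
def HCtx.captures : HCtx → ℕ → Prop
  | .hole, _ => False
  | .app H _, x => H.captures x
  | .sub H y _, x => y = x ∨ H.captures x

/-- Free variables of a weak head context. -/
def HCtx.fv : HCtx → Finset ℕ
  | .hole => ∅
  | .app H t => H.fv ∪ t.fv
  | .sub H y t => H.fv.erase y ∪ t.fv

/-- Multiplicative (weak-head distance-β) reduction: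
    the closure under weak head contexts of `L⟨λx.t⟩ u ↦ L⟨t[x←u]⟩`. -/
inductive Rm : Term → Term → Prop
  | step (H : HCtx) (L : LCtx) (x : ℕ) (t u : Term) :
      Rm (H.plug (.app (L.plug (.lam x t)) u)) (H.plug (L.plug (.sub t x u)))

/-- Exponential (weak linear head substitution) reduction:
    the closure under weak head contexts of `H'⟨x⟩[x←u] ↦ H'⟨u⟩[x←u]`,
    with `x` not captured by `H'`. -/
inductive Re : Term → Term → Prop
  | step (H H' : HCtx) (x : ℕ) (u : Term) :
      ¬ H'.captures x →
      Re (H.plug (.sub (H'.plug (.var x)) x u)) (H.plug (.sub (H'.plug u) x u))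
/-- Pure λ-terms (codes of the machine). -/
inductive PTerm : Type
  | var : ℕ → PTerm
  | lam : ℕ → PTerm → PTerm
  | app : PTerm → PTerm → PTerm
deriving DecidableEq

def PTerm.toTerm : PTerm → Term
  | .var x => .var x
  | .lam x t => .lam x t.toTerm
  | .app t u => .app t.toTerm u.toTerm

def PTerm.fv : PTerm → Finset ℕ
  | .var x => {x}
  | .lam x t => t.fv.erase x
  | .app t u => t.fv ∪ u.fv

def PTerm.size : PTerm → ℕ
  | .var _ => 1
  | .lam _ t => t.size + 1
  | .app t u => t.size + u.size + 1

mutual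
  /-- Closures: a code together with an environment. -/
  inductive Clo : Type
    | mk : PTerm → Env → Clo
  /-- Local environments. -/
  inductive Env : Type
    | nil : Env
    | cons : ℕ → Clo → Env → Env
end

def Env.lookup : Env → ℕ → Option Clo
  | .nil, _ => none
  | .cons y c e, x => if y = x then some c else e.lookup x

mutual
  /-- Decoding of closures: `⟦(t̄,e)⟧ = ⟦e⟧⟨t̄⟩`. -/
  def Clo.decode : Clo → Term
    | .mk t e => Env.decodeIn e t.toTerm
  /-- Decoding of environments as contexts, given as functions on terms:
      `⟦ε⟧ = ⟨·⟩` and `⟦[x←c]::e⟧ = ⟦e⟧⟨⟨·⟩[x←⟦c⟧]⟩`. -/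
  def Env.decodeIn : Env → Term → Term
    | .nil, t => t
    | .cons x c e, t => Env.decodeIn e (.sub t x (Clo.decode c))
end

/-- Decoding of stacks as contexts: `⟦ε⟧ = ⟨·⟩`, `⟦c::π⟧ = ⟦π⟧⟨⟨·⟩ ⟦c⟧⟩`. -/
def stackDecodeIn : List Clo → Term → Term
  | [], t => t
  | c :: π, t => stackDecodeIn π (.app t (Clo.decode c))

/-- KAM states: code, environment, stack. -/
structure KState : Type where
  code : PTerm
  env : Env
  stack : List Clo

/-- Decoding of states: `⟦(t̄ | e | π)⟧ = ⟦π⟧⟨⟦e⟧⟨t̄⟩⟩`. -/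
def KState.decode (s : KState) : Term :=
  stackDecodeIn s.stack (Env.decodeIn s.env s.code.toTerm)

/-- KAM transitions: commutative, multiplicative and exponential. -/
inductive KStep : KState → KState → Prop
  | comm (t u : PTerm) (e : Env) (π : List Clo) :
      KStep ⟨.app t u, e, π⟩ ⟨t, e, Clo.mk u e :: π⟩
  | mul (x : ℕ) (t : PTerm) (e : Env) (c : Clo) (π : List Clo) :
      KStep ⟨.lam x t, e, c :: π⟩ ⟨t, Env.cons x c e, π⟩
  | exp (x : ℕ) (t : PTerm) (e e' : Env) (π : List Clo) :
      e.lookup x = some (Clo.mk t e') →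
      KStep ⟨.var x, e, π⟩ ⟨t, e', π⟩

/-- Initial states: closed code, empty environment and stack. -/
def KState.Initial (s : KState) : Prop :=
  s.code.fv = ∅ ∧ s.env = .nil ∧ s.stack = []

/-- Reachable states. -/
def KState.Reachable (s : KState) : Prop :=
  ∃ s₀, s₀.Initial ∧ Relation.ReflTransGen KStep s₀ s

/-- The commutative transition of the KAM, in isolation. -/
inductive KComm : KState → KState → Prop
  | comm (t u : PTerm) (e : Env) (π : List Clo) :
      KComm ⟨.app t u, e, π⟩ ⟨t, e, Clo.mk u e :: π⟩

/-- Sequences of consecutive commutative transitions, with length. -/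
def CIter : ℕ → KState → KState → Prop
  | 0, s, s' => s = s'
  | k + 1, s, s' => ∃ s'', KComm s s'' ∧ CIter k s'' s'

mutual
  def CloBound (n : ℕ) : Clo → Prop
    | .mk t e => t.size ≤ n ∧ EnvBound n e
  def EnvBound (n : ℕ) : Env → Prop
    | .nil => True
    | .cons _ c e => CloBound n c ∧ EnvBound n e
end

lemma EnvBound.lookup {n : ℕ} : ∀ {e : Env} {x : ℕ} {c : Clo},
    EnvBound n e → e.lookup x = some c → CloBound n c
  | .nil, _, _, _, hl => by simp [Env.lookup] at hl
  | .cons y c' e, x, c, h, hl => by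
    rw [EnvBound] at h
    rw [Env.lookup] at hl
    split at hl
    · cases hl; exact h.1
    · exact EnvBound.lookup h.2 hl

def StateBound (n : ℕ) (s : KState) : Prop :=
  s.code.size ≤ n ∧ EnvBound n s.env ∧ ∀ c ∈ s.stack, CloBound n c

lemma PTerm.size_pos (t : PTerm) : 1 ≤ t.size := by
  cases t <;> simp [PTerm.size]

lemma StateBound.step {n : ℕ} {s s' : KState} (h : StateBound n s)
    (hs : KStep s s') : StateBound n s' := by
  obtain ⟨h1, h2, h3⟩ := h
  cases hs with
  | comm t u e π =>
    simp only [PTerm.size] at h1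
    refine ⟨show t.size ≤ n by omega, h2, ?_⟩
    intro c hc
    rcases List.mem_cons.1 hc with rfl | hc
    · exact ⟨show u.size ≤ n by omega, h2⟩
    · exact h3 c hc
  | mul x t e c π =>
    simp only [PTerm.size] at h1
    have hc := h3 c List.mem_cons_self
    exact ⟨show t.size ≤ n by omega, ⟨hc, h2⟩, fun c' hc' => h3 c' (List.mem_cons_of_mem _ hc')⟩
  | exp x t e e' π hl =>
    have := EnvBound.lookup h2 hl
    rw [CloBound] at this
    exact ⟨this.1, this.2, h3⟩

lemma CIter.le {k : ℕ} {s s' : KState} (h : CIter k s s') :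
    k + s'.code.size ≤ s.code.size := by
  induction k generalizing s with
  | zero => cases h; omega
  | succ k ih =>
    obtain ⟨s'', hc, hrest⟩ := h
    have := ih hrest
    cases hc with
    | comm t u e π => simp only [PTerm.size] at *; omega

/-- The KAM is locally linear: each commutative transition strictly decreases
    the size of the code and, thanks to the subterm invariant, every sequence
    of consecutive commutative transitions from a reachable state has length
    at most the size of the initial code. -/
theorem kam_locally_linear :
    (∀ s s', KComm s s' → s'.code.size < s.code.size) ∧
    (∀ (s₀ s s' : KState) (k : ℕ),
      s₀.Initial → Relation.ReflTransGen KStep s₀ s →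
      CIter k s s' → k ≤ s₀.code.size) := by
  constructor
  · intro s s' h
    cases h with
    | comm t u e π =>
      simp only [PTerm.size]
      have := PTerm.size_pos u
      omega
  · intro s₀ s s' k hinit hsteps hiter
    have hb : StateBound s₀.code.size s := by
      clear hiter
      induction hsteps with
      | refl => exact ⟨le_refl _, by rw [hinit.2.1]; trivial,
          by rw [hinit.2.2]; simp⟩
      | tail _ hstep ih => exact ih.step hstep
    have h1 := hiter.le
    have h2 := PTerm.size_pos s'.code
    have h3 := hb.1
    omega
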